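/- Let N₀ > 0 and t ≥ 0 be real numbers with N₀·t > 1/2, and define f(n) = 1/(N₀+n) + t·n²/(N₀+n)² for n ≥ 0. Then at the interior optimum n′ = N₀/(2·N₀·t − 1), the minimum value is f(n′) = 1/N₀ − 1/(4·t·N₀²). In particular f(n′) < 1/N₀ = f(0), so transferring n′ source samples strictly reduces the dominant error term compared to using the target samples alone. -/

import Mathlib

/-- Closed-form minimum value at the interior optimum `n′ = N₀/(2N₀t−1)` when
`N₀·t > 1/2`: `f(n′) = 1/N₀ − 1/(4tN₀²) < 1/N₀ = f(0)`, so transferring `n′`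
source samples strictly reduces the dominant error term compared to using the
target samples alone. -/
theorem stmt_11 (N₀ t : ℝ) (hN₀ : 0 < N₀) (ht : 0 ≤ t) (hcase : 1 / 2 < N₀ * t)
    (n' : ℝ) (hn' : n' = N₀ / (2 * N₀ * t - 1))
    (f : ℝ → ℝ) (hf : ∀ n, f n = 1 / (N₀ + n) + t * n ^ 2 / (N₀ + n) ^ 2) :
    f n' = 1 / N₀ - 1 / (4 * t * N₀ ^ 2) ∧ f 0 = 1 / N₀ ∧ f n' < f 0 := by
  have hd : 0 < 2 * N₀ * t - 1 := by nlinarith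
  have ht' : 0 < t := by nlinarith
  have hsum : N₀ + n' = 2 * N₀ ^ 2 * t / (2 * N₀ * t - 1) := by
    rw [hn', eq_div_iff hd.ne', add_mul, div_mul_cancel₀ _ hd.ne']; ring
  have hsum' : 0 < N₀ + n' := by
    rw [hsum]; positivity
  have h1 : f n' = 1 / N₀ - 1 / (4 * t * N₀ ^ 2) := by
    rw [hf, hsum, hn']
    rw [div_pow, div_pow, one_div_div, mul_div_assoc', div_div_div_cancel_right₀ (pow_ne_zero 2 hd.ne')]
    field_simp
    ring
  have h2 : f 0 = 1 / N₀ := by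
    rw [hf]; norm_num
  refine ⟨h1, h2, ?_⟩
  rw [h1, h2]
  have : 0 < 1 / (4 * t * N₀ ^ 2) := by positivity
  linarith
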